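/- There is no injective graph homomorphism from the complete bipartite graph K_{3,3} into the Petersen graph, and there is no injective graph homomorphism from the Petersen graph into K_{3,3}. -/

import Mathlib

open SimpleGraph

/-- The Petersen graph: vertices are 2-element subsets of a 5-element set, adjacent iff
disjoint. -/
def petersenGraph : SimpleGraph {s : Finset (Fin 5) // s.card = 2} where
  Adj s t := Disjoint s.val t.val
  symm := ⟨fun s t h => h.symm⟩
  loopless := ⟨fun s h => by
    have hs : s.val = ∅ := disjoint_self.mp h
    have := s.prop
    rw [hs] at this
    simp at this⟩

set_option synthInstance.maxSize 1000 in
lemma petersen_no_two_common_neighbors :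
    ∀ s t u v : {s : Finset (Fin 5) // s.card = 2}, s ≠ t → u ≠ v →
      ¬ (Disjoint s.val u.val ∧ Disjoint t.val u.val ∧
         Disjoint s.val v.val ∧ Disjoint t.val v.val) := by
  decide

/-- Neither of `K_{3,3}` and the Petersen graph embeds into the other. -/
theorem k33_petersen_no_mutual_embedding :
    (¬ ∃ f : completeBipartiteGraph (Fin 3) (Fin 3) →g petersenGraph,
      Function.Injective f) ∧
    (¬ ∃ g : petersenGraph →g completeBipartiteGraph (Fin 3) (Fin 3),
      Function.Injective g) := by
  constructor
  · rintro ⟨f, hf⟩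
    have hst : f (Sum.inl 0) ≠ f (Sum.inl 1) := fun h => by
      have := hf h; simp at this
    have huv : f (Sum.inr 0) ≠ f (Sum.inr 1) := fun h => by
      have := hf h; simp at this
    refine petersen_no_two_common_neighbors _ _ _ _ hst huv
      ⟨?_, ?_, ?_, ?_⟩ <;>
    · apply f.map_adj; simp [completeBipartiteGraph]
  · rintro ⟨g, hg⟩
    have h1 : Fintype.card {s : Finset (Fin 5) // s.card = 2} ≤
        Fintype.card (Fin 3 ⊕ Fin 3) := Fintype.card_le_of_injective g hg
    have h2 : Fintype.card {s : Finset (Fin 5) // s.card = 2} = 10 := by decide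
    simp [h2, Fintype.card_sum] at h1
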